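/- Let S denote the group (under matrix multiplication) of invertible twisted-circulant matrices, S = {A(a) : a ∈ W^n, a_0 ∈ W^×}. The map S → 𝔽_{p^n}^× sending A(a_0, …, a_{n−1}) to π(a_0) is a surjective group homomorphism; its kernel is S⁰ = {A(a) ∈ S : a_0 − 1 ∈ pW} (the strict automorphisms), and the map c ↦ A(e(c), 0, …, 0) is a group-homomorphism splitting, so there is a split short exact sequence S⁰ → S → 𝔽_{p^n}^×. -/

import Mathlib

/-- The Frobenius automorphism `σ` of `W = W(K)`, induced by functoriality of Witt vectors
from the Frobenius automorphism `x ↦ x^p` of the finite field `K`. -/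
noncomputable def wittFrob (p : ℕ) [Fact p.Prime]
    (K : Type) [Field K] [Fintype K] [CharP K p] : RingAut (WittVector p K) :=
  RingEquiv.ofRingHom (WittVector.map ((frobeniusEquiv K p : K ≃+* K) : K →+* K))
    (WittVector.map (((frobeniusEquiv K p).symm : K ≃+* K) : K →+* K))
    (by
      apply RingHom.ext
      intro x
      apply WittVector.ext
      intro k
      simp [WittVector.map_coeff])
    (by
      apply RingHom.ext
      intro x
      apply WittVector.ext
      intro k
      simp [WittVector.map_coeff])

/-- The "twisted-circulant" matrix `A(a)` of a tuple `a = (a_0, …, a_{n−1}) ∈ Wⁿ`: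
`A(a)_{ij} = σ^{−i}(a_{i−j})` for `i ≥ j` and `A(a)_{ij} = p·σ^{−i}(a_{n+i−j})` for `i < j`
(the index `i − j` resp. `n + i − j` is subtraction modulo `n`, i.e. subtraction in `Fin n`). -/
noncomputable def twc (p : ℕ) [Fact p.Prime]
    (K : Type) [Field K] [Fintype K] [CharP K p] (n : ℕ)
    (a : Fin n → WittVector p K) : Matrix (Fin n) (Fin n) (WittVector p K) :=
  Matrix.of fun i j =>
    if (j : ℕ) ≤ (i : ℕ) then ((wittFrob p K)⁻¹ ^ (i : ℕ)) (a (i - j))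
    else (p : WittVector p K) * (((wittFrob p K)⁻¹ ^ (i : ℕ)) (a (i - j)))

section Aux

variable (p : ℕ) [Fact p.Prime] (K : Type) [Field K] [Fintype K] [CharP K p]

theorem aux_dvd_of_cc_zero (x : WittVector p K) (hx : WittVector.constantCoeff x = 0) :
    ∃ y : WittVector p K, x = p * y := by
  haveI : ExpChar K p := ExpChar.prime Fact.out
  by_cases h0 : x = 0
  · exact ⟨0, by simp [h0]⟩
  obtain ⟨m, b, hb, rfl⟩ := WittVector.exists_eq_pow_p_mul x h0
  cases m with
  | zero =>
    exfalso
    apply hb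
    simpa [WittVector.constantCoeff_apply] using hx
  | succ k => exact ⟨(p : WittVector p K) ^ k * b, by ring⟩

theorem aux_cc_p : WittVector.constantCoeff (p : WittVector p K) = 0 := by
  simpa [WittVector.constantCoeff_apply] using WittVector.coeff_p_zero (p := p) (R := K)

theorem aux_cc_teichmuller (c : K) :
    WittVector.constantCoeff (WittVector.teichmuller p c) = c := by
  rw [WittVector.constantCoeff_apply, WittVector.teichmuller_coeff_zero]

variable {n : ℕ} (hn : 1 ≤ n)

theorem twc_diag (i j : Fin n) (a : Fin n → WittVector p K) (h : (j : ℕ) ≤ (i : ℕ)) :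
    twc p K n a i j = ((wittFrob p K)⁻¹ ^ (i : ℕ)) (a (i - j)) := by
  simp only [twc, Matrix.of_apply, if_pos h]

theorem twc_zero_zero (hn : 1 ≤ n) (a : Fin n → WittVector p K) :
    twc p K n a ⟨0, hn⟩ ⟨0, hn⟩ = a ⟨0, hn⟩ := by
  haveI : NeZero n := ⟨by omega⟩
  have h0 : (⟨0, hn⟩ : Fin n) = 0 := rfl
  simp only [twc, Matrix.of_apply, h0, Fin.val_zero, le_refl, if_pos, pow_zero, sub_self]
  rfl

theorem twc_row_zero (hn : 1 ≤ n) (a : Fin n → WittVector p K) (j : Fin n) (hj : j ≠ ⟨0, hn⟩) :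
    WittVector.constantCoeff (twc p K n a ⟨0, hn⟩ j) = 0 := by
  haveI : NeZero n := ⟨by omega⟩
  have hjv : (j : ℕ) ≠ 0 := by
    intro hc
    exact hj (Fin.ext (by simp [hc]))
  have hj' : ¬ ((j : ℕ) ≤ ((⟨0, hn⟩ : Fin n) : ℕ)) := by
    simp only []
    omega
  simp only [twc, Matrix.of_apply, if_neg hj', map_mul]
  rw [aux_cc_p, zero_mul]

theorem twc_delta (hn : 1 ≤ n) (x : WittVector p K) :
    twc p K n (fun j => if (j : ℕ) = 0 then x else 0) =
      Matrix.diagonal (fun i : Fin n => ((wittFrob p K)⁻¹ ^ (i : ℕ)) x) := by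
  haveI : NeZero n := ⟨by omega⟩
  ext i j
  by_cases h : i = j
  · subst h
    simp [twc, Matrix.diagonal_apply_eq]
  · have hsub : ((i - j : Fin n) : ℕ) ≠ 0 := by
      intro hc
      apply h
      have : (i - j : Fin n) = 0 := Fin.ext (by simpa using hc)
      have := sub_eq_zero.mp this
      exact this
    rw [Matrix.diagonal_apply_ne _ h]
    simp [twc, hsub, sub_eq_zero, h]

/-- Diagonal twisted-circulant matrices, as a monoid hom from `K`. -/
noncomputable def twcDiagHom : K →* Matrix (Fin n) (Fin n) (WittVector p K) where
  toFun c := Matrix.diagonal (fun i => ((wittFrob p K)⁻¹ ^ (i : ℕ)) (WittVector.teichmuller p c))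
  map_one' := by simp
  map_mul' c c' := by
    show Matrix.diagonal _ = Matrix.diagonal _ * Matrix.diagonal _
    rw [Matrix.diagonal_mul_diagonal]
    refine congrArg Matrix.diagonal ?_
    funext i
    rw [map_mul, map_mul]

end Aux

/-- Let `S` be the group (under matrix multiplication, as a subgroup of the
unit group of the matrix ring) of invertible twisted-circulant matrices
`S = {A(a) : a ∈ Wⁿ, a₀ ∈ W^×}`. The map `S → 𝔽_{p^n}^×` sending `A(a₀, …, a_{n−1})` to
`π(a₀)` is a surjective group homomorphism; its kernel is
`S⁰ = {A(a) ∈ S : a₀ − 1 ∈ pW}` (the strict automorphisms), and `c ↦ A(e(c), 0, …, 0)` is a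
group-homomorphism splitting, giving a split short exact sequence `S⁰ → S → 𝔽_{p^n}^×`. -/
theorem twc_units_to_residue_field_units
    (p n : ℕ) [Fact p.Prime] (hn : 1 ≤ n)
    (K : Type) [Field K] [Fintype K] [CharP K p] (hK : Fintype.card K = p ^ n)
    (S : Subgroup (Matrix (Fin n) (Fin n) (WittVector p K))ˣ)
    (hS : ∀ U : (Matrix (Fin n) (Fin n) (WittVector p K))ˣ,
      U ∈ S ↔ ∃ a : Fin n → WittVector p K, IsUnit (a ⟨0, hn⟩) ∧
        (U : Matrix (Fin n) (Fin n) (WittVector p K)) = twc p K n a) :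
    ∃ φ : S →* Kˣ,
      (∀ (U : S) (a : Fin n → WittVector p K),
        ((U : (Matrix (Fin n) (Fin n) (WittVector p K))ˣ) :
            Matrix (Fin n) (Fin n) (WittVector p K)) = twc p K n a →
        (φ U : K) = WittVector.constantCoeff (a ⟨0, hn⟩)) ∧
      Function.Surjective φ ∧
      (∀ U : S, φ U = 1 ↔
        ∃ a : Fin n → WittVector p K,
          ((U : (Matrix (Fin n) (Fin n) (WittVector p K))ˣ) :
              Matrix (Fin n) (Fin n) (WittVector p K)) = twc p K n a ∧
          ∃ y : WittVector p K, a ⟨0, hn⟩ - 1 = p * y) ∧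
      ∃ s : Kˣ →* S,
        (∀ c : Kˣ, φ (s c) = c) ∧
        ∀ c : Kˣ,
          (((s c : S) : (Matrix (Fin n) (Fin n) (WittVector p K))ˣ) :
              Matrix (Fin n) (Fin n) (WittVector p K)) =
            twc p K n (fun j => if (j : ℕ) = 0 then WittVector.teichmuller p (c : K) else 0) := by
  classical
  set i0 : Fin n := ⟨0, hn⟩ with hi0
  -- the value of any element of S is a twc matrix
  have hmem : ∀ U : S, ∃ a : Fin n → WittVector p K, IsUnit (a i0) ∧
      ((U : (Matrix (Fin n) (Fin n) (WittVector p K))ˣ) :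
        Matrix (Fin n) (Fin n) (WittVector p K)) = twc p K n a :=
    fun U => (hS U.1).mp U.2
  -- the (0,0) constant coefficient is a unit
  have hccP : ∀ U : S, IsUnit (WittVector.constantCoeff
      (((U : (Matrix (Fin n) (Fin n) (WittVector p K))ˣ) :
        Matrix (Fin n) (Fin n) (WittVector p K)) i0 i0)) := by
    intro U
    obtain ⟨a, ha, hUa⟩ := hmem U
    rw [hUa, twc_zero_zero p K hn a]
    exact ha.map WittVector.constantCoeff
  -- multiplicativity of the (0,0) constant coefficient on S
  have hval : ∀ U V : S,
      WittVector.constantCoeff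
        (((↑(U * V) : (Matrix (Fin n) (Fin n) (WittVector p K))ˣ) :
          Matrix (Fin n) (Fin n) (WittVector p K)) i0 i0) =
      WittVector.constantCoeff
        (((↑U : (Matrix (Fin n) (Fin n) (WittVector p K))ˣ) :
          Matrix (Fin n) (Fin n) (WittVector p K)) i0 i0) *
      WittVector.constantCoeff
        (((↑V : (Matrix (Fin n) (Fin n) (WittVector p K))ˣ) :
          Matrix (Fin n) (Fin n) (WittVector p K)) i0 i0) := by
    intro U V
    obtain ⟨a, ha, hUa⟩ := hmem U
    have hprod : ((↑(U * V) : (Matrix (Fin n) (Fin n) (WittVector p K))ˣ) :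
        Matrix (Fin n) (Fin n) (WittVector p K)) =
        ((↑U : (Matrix (Fin n) (Fin n) (WittVector p K))ˣ) :
          Matrix (Fin n) (Fin n) (WittVector p K)) *
        ((↑V : (Matrix (Fin n) (Fin n) (WittVector p K))ˣ) :
          Matrix (Fin n) (Fin n) (WittVector p K)) := rfl
    rw [hprod, Matrix.mul_apply, map_sum]
    rw [Finset.sum_eq_single i0]
    · rw [map_mul]
    · intro k _ hk
      rw [map_mul, hUa, twc_row_zero p K hn a k hk, zero_mul]
    · intro h
      exact absurd (Finset.mem_univ i0) h
  -- the homomorphism φ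
  let φ : S →* Kˣ := MonoidHom.mk' (fun U => (hccP U).unit) (by
    intro U V
    ext
    simp only [Units.val_mul, IsUnit.unit_spec]
    exact hval U V)
  have hφval : ∀ (U : S) (a : Fin n → WittVector p K),
      ((U : (Matrix (Fin n) (Fin n) (WittVector p K))ˣ) :
          Matrix (Fin n) (Fin n) (WittVector p K)) = twc p K n a →
      (φ U : K) = WittVector.constantCoeff (a ⟨0, hn⟩) := by
    intro U a hUa
    show ((hccP U).unit : K) = _
    rw [IsUnit.unit_spec, hUa, twc_zero_zero p K hn a]
  -- the splitting s
  have htunit : ∀ c : Kˣ, IsUnit (WittVector.teichmuller p (c : K)) := by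
    intro c
    refine IsUnit.of_mul_eq_one (WittVector.teichmuller p ((c⁻¹ : Kˣ) : K)) ?_
    rw [← map_mul]
    norm_cast
    rw [mul_inv_cancel]
    exact map_one _
  have hs0mem : ∀ c : Kˣ, (Units.map (twcDiagHom p K (n := n)) c) ∈ S := by
    intro c
    rw [hS]
    refine ⟨fun j => if (j : ℕ) = 0 then WittVector.teichmuller p (c : K) else 0, ?_, ?_⟩
    · simpa [hi0] using htunit c
    · rw [twc_delta p K hn]
      rfl
  let s : Kˣ →* S :=
    MonoidHom.codRestrict (Units.map (twcDiagHom p K (n := n))) S hs0mem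
  have hsval : ∀ c : Kˣ,
      (((s c : S) : (Matrix (Fin n) (Fin n) (WittVector p K))ˣ) :
          Matrix (Fin n) (Fin n) (WittVector p K)) =
        twc p K n (fun j => if (j : ℕ) = 0 then WittVector.teichmuller p (c : K) else 0) := by
    intro c
    rw [twc_delta p K hn]
    rfl
  have hsplit : ∀ c : Kˣ, φ (s c) = c := by
    intro c
    ext
    rw [hφval (s c) _ (hsval c)]
    simpa using aux_cc_teichmuller p K (c : K)
  refine ⟨φ, hφval, ?_, ?_, s, hsplit, hsval⟩
  · intro c
    exact ⟨s c, hsplit c⟩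
  · intro U
    constructor
    · intro h1
      obtain ⟨a, ha, hUa⟩ := hmem U
      refine ⟨a, hUa, ?_⟩
      have hcc1 : WittVector.constantCoeff (a ⟨0, hn⟩) = 1 := by
        rw [← hφval U a hUa, h1, Units.val_one]
      have hcc0 : WittVector.constantCoeff (a ⟨0, hn⟩ - 1) = 0 := by
        rw [map_sub, hcc1, map_one, sub_self]
      exact aux_dvd_of_cc_zero p K _ hcc0
    · rintro ⟨a, hUa, y, hy⟩
      ext
      rw [hφval U a hUa, Units.val_one]
      have : a ⟨0, hn⟩ = 1 + p * y := by linear_combination hy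
      rw [this, map_add, map_mul, map_one, aux_cc_p, zero_mul, add_zero]
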